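/- Consider the BMS map F : ℝ^N → ℝ^N, F_k(V) = γ·V_k·(1 − Z(V_k)) + ∑_{j=1}^{N} W_{kj}·Z(V_j) + I_k, where Z(x) = 1 if x ≥ θ and 0 otherwise, γ ∈ [0,1), W ∈ ℝ^{N×N}, I ∈ ℝ^N, and let M = [V_min, V_max]^N be a compact cube with F(M) ⊆ M. Let Ω = ⋃_{V ∈ M} ω(V) be the ω-limit set of M and assume d(Ω, 𝒮) = inf_{x ∈ Ω} min_{1≤i≤N} |x_i − θ| > 0, where 𝒮 = { V ∈ M : ∃ i, V_i = θ }. Then the raster plot is a faithful symbolic coding of the asymptotic dynamics: the map sending x ∈ Ω to its raster plot, i.e. to the function (t, k) ↦ Z((F^t x)_k) from ℕ × {1,…,N} to {0,1}, is injective on Ω. Equivalently, if x, y ∈ Ω satisfy (F^t x)_k ≥ θ ⇔ (F^t y)_k ≥ θ for all t ∈ ℕ and all k, then x = y. -/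

import Mathlib

open Filter Topology

/-- `Z θ x = 1` if `x ≥ θ` (firing) and `0` otherwise. -/
noncomputable def Z (θ x : ℝ) : ℝ := if θ ≤ x then 1 else 0

/-- The ω-limit set of a point `V` under the map `F`: the set of accumulation
points of the orbit `(F^[t] V)`, i.e. limits of `F^[t_k] V` along strictly
increasing sequences of times `t_k → ∞`. -/
def omegaPts {α : Type*} [TopologicalSpace α] (F : α → α) (V : α) : Set α :=
  {y | ∃ φ : ℕ → ℕ, StrictMono φ ∧
    Filter.Tendsto (fun n => F^[φ n] V) Filter.atTop (nhds y)}

/-- Theorem 2, item 2 of the paper: if the ω-limit set `Ω` of the invariant cube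
`M` under the BMS map stays at a positive distance from the singularity set
`𝒮 = {V : ∃ i, V i = θ}`, then the raster plot is a faithful symbolic coding
of the asymptotic dynamics: two points of `Ω` whose orbits have the same raster
plot coincide. -/
theorem BMS_raster_plot_injective
    (N : ℕ) (hN : 1 ≤ N) (θ γ : ℝ) (hγ0 : 0 ≤ γ) (hγ1 : γ < 1)
    (W : Fin N → Fin N → ℝ) (I : Fin N → ℝ)
    (F : (Fin N → ℝ) → (Fin N → ℝ))
    (hF : ∀ V k, F V k =
      γ * V k * (1 - Z θ (V k)) + (∑ j, W k j * Z θ (V j)) + I k)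
    (Vmin Vmax : ℝ)
    (M : Set (Fin N → ℝ))
    (hM : M = {V | ∀ k, V k ∈ Set.Icc Vmin Vmax})
    (hInv : ∀ V ∈ M, F V ∈ M)
    (Ω : Set (Fin N → ℝ))
    (hΩ : Ω = ⋃ V ∈ M, omegaPts F V)
    (hdist : ∃ d : ℝ, 0 < d ∧ ∀ x ∈ Ω, ∀ i : Fin N, d ≤ |x i - θ|) :
    ∀ x ∈ Ω, ∀ y ∈ Ω,
      (∀ t : ℕ, ∀ k : Fin N, θ ≤ F^[t] x k ↔ θ ≤ F^[t] y k) → x = y := by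
  obtain ⟨d, hd0, hdΩ⟩ := hdist
  -- one-step contraction for points with the same firing pattern
  have hcontr : ∀ z u : Fin N → ℝ, (∀ k, (θ ≤ z k ↔ θ ≤ u k)) →
      dist (F z) (F u) ≤ γ * dist z u := by
    intro z u hzu
    have hnn : (0:ℝ) ≤ γ * dist z u := mul_nonneg hγ0 dist_nonneg
    rw [dist_pi_le_iff hnn]
    intro k
    have hsum : (∑ j, W k j * Z θ (z j)) = ∑ j, W k j * Z θ (u j) := by
      refine Finset.sum_congr rfl fun j _ => ?_
      unfold Z
      by_cases h : θ ≤ u j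
      · rw [if_pos h, if_pos ((hzu j).2 h)]
      · rw [if_neg h, if_neg (fun h' => h ((hzu j).1 h'))]
    have hk : dist (z k) (u k) ≤ dist z u := dist_le_pi_dist z u k
    rw [Real.dist_eq] at hk ⊢
    rw [hF, hF, hsum]
    set S := ∑ j, W k j * Z θ (u j) with hS
    by_cases h : θ ≤ u k
    · have hz' : θ ≤ z k := (hzu k).2 h
      rw [show Z θ (z k) = 1 from if_pos hz', show Z θ (u k) = 1 from if_pos h]
      have heq : γ * z k * (1 - 1) + S + I k - (γ * u k * (1 - 1) + S + I k) = 0 := by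
        ring
      rw [heq, abs_zero]
      exact hnn
    · have hz' : ¬ θ ≤ z k := fun h' => h ((hzu k).1 h')
      rw [show Z θ (z k) = 0 from if_neg hz', show Z θ (u k) = 0 from if_neg h]
      have heq : γ * z k * (1 - 0) + S + I k - (γ * u k * (1 - 0) + S + I k)
          = γ * (z k - u k) := by ring
      rw [heq, abs_mul, abs_of_nonneg hγ0]
      exact mul_le_mul_of_nonneg_left hk hγ0
  -- points close to Ω have the same firing pattern as the Ω point
  have hnear : ∀ u ∈ Ω, ∀ z : Fin N → ℝ, dist z u < d →
      ∀ k, (θ ≤ z k ↔ θ ≤ u k) := by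
    intro u hu z hz k
    have h1 : d ≤ |u k - θ| := hdΩ u hu k
    have h2 : |z k - u k| < d := by
      have := dist_le_pi_dist z u k
      rw [Real.dist_eq] at this
      exact lt_of_le_of_lt this hz
    obtain ⟨h2a, h2b⟩ := abs_lt.mp h2
    rcases le_or_gt θ (u k) with h | h
    · have : |u k - θ| = u k - θ := abs_of_nonneg (by linarith)
      rw [this] at h1
      exact ⟨fun _ => h, fun _ => by linarith⟩
    · have : |u k - θ| = -(u k - θ) := abs_of_neg (by linarith)
      rw [this] at h1
      constructor
      · intro h'; linarith
      · intro h'; linarith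
  -- membership extraction
  have hmemΩ : ∀ u ∈ Ω, ∃ V, V ∈ M ∧ ∃ φ : ℕ → ℕ, StrictMono φ ∧
      Tendsto (fun n => F^[φ n] V) atTop (nhds u) := by
    intro u hu
    rw [hΩ] at hu
    simp only [Set.mem_iUnion, omegaPts, Set.mem_setOf_eq] at hu
    obtain ⟨V, hV, φ, hφ, hlim⟩ := hu
    exact ⟨V, hV, φ, hφ, hlim⟩
  -- Ω is forward invariant
  have hΩinv : ∀ u ∈ Ω, F u ∈ Ω := by
    intro u hu
    obtain ⟨V, hV, φ, hφ, hlim⟩ := hmemΩ u hu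
    have hdist0 : Tendsto (fun n => dist (F^[φ n] V) u) atTop (nhds 0) :=
      tendsto_iff_dist_tendsto_zero.1 hlim
    have hev : ∀ᶠ n in atTop, dist (F^[φ n + 1] V) (F u) ≤ γ * dist (F^[φ n] V) u := by
      obtain ⟨J, hJ⟩ := Metric.tendsto_atTop.1 hlim d hd0
      refine eventually_atTop.2 ⟨J, fun n hn => ?_⟩
      rw [Function.iterate_succ_apply']
      exact hcontr _ _ (hnear u hu _ (hJ n hn))
    have hlim' : Tendsto (fun n => F^[φ n + 1] V) atTop (nhds (F u)) := by
      rw [tendsto_iff_dist_tendsto_zero]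
      refine squeeze_zero' (Eventually.of_forall fun n => dist_nonneg) hev ?_
      simpa using hdist0.const_mul γ
    rw [hΩ]
    simp only [Set.mem_iUnion]
    exact ⟨V, hV, fun n => φ n + 1, fun a b h => by simpa using hφ h, hlim'⟩
  have hiter : ∀ u ∈ Ω, ∀ t, F^[t] u ∈ Ω := by
    intro u hu t
    induction t with
    | zero => simpa using hu
    | succ t ih => rw [Function.iterate_succ_apply']; exact hΩinv _ ih
  -- shadowing: a point within d of an Ω point stays exponentially close
  have hshadow : ∀ u ∈ Ω, ∀ z, dist z u < d → ∀ t,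
      dist (F^[t] z) (F^[t] u) ≤ γ ^ t * dist z u := by
    intro u hu z hz t
    induction t with
    | zero => simp
    | succ t ih =>
      have hle1 : γ ^ t ≤ 1 := pow_le_one₀ hγ0 hγ1.le
      have hlt : dist (F^[t] z) (F^[t] u) < d := by
        have : γ ^ t * dist z u ≤ dist z u := by
          nlinarith [dist_nonneg (x := z) (y := u)]
        linarith [ih]
      rw [Function.iterate_succ_apply', Function.iterate_succ_apply']
      calc dist (F (F^[t] z)) (F (F^[t] u))
          ≤ γ * dist (F^[t] z) (F^[t] u) :=
            hcontr _ _ (hnear _ (hiter u hu t) _ hlt)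
        _ ≤ γ * (γ ^ t * dist z u) := mul_le_mul_of_nonneg_left ih hγ0
        _ = γ ^ (t + 1) * dist z u := by ring
  -- recurrence: every Ω point returns arbitrarily close at arbitrarily late times
  have hR : ∀ u ∈ Ω, ∀ ε > (0:ℝ), ∀ T : ℕ, ∃ n, T ≤ n ∧ dist (F^[n] u) u < ε := by
    intro u hu ε hε T
    obtain ⟨V, hV, φ, hφ, hlim⟩ := hmemΩ u hu
    set ε' := min (ε / 2) (d / 2) with hε'def
    have hε'0 : 0 < ε' := lt_min (by linarith) (by linarith)
    have hε'd : ε' < d := lt_of_le_of_lt (min_le_right _ _) (by linarith)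
    have hε'ε : ε' + ε' ≤ ε := by
      have := min_le_left (ε / 2) (d / 2); linarith
    obtain ⟨J, hJ⟩ := Metric.tendsto_atTop.1 hlim ε' hε'0
    have hφle : ∀ a b : ℕ, φ a + b ≤ φ (a + b) := by
      intro a b
      induction b with
      | zero => simp
      | succ b ih =>
        have h2 : φ (a + b) < φ (a + (b + 1)) := hφ (by omega)
        omega
    have hmono : φ J ≤ φ (J + T) := hφ.monotone (Nat.le_add_right J T)
    set n := φ (J + T) - φ J with hndef
    have hn : n + φ J = φ (J + T) := by omega
    have hnT : T ≤ n := by have := hφle J T; omega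
    have h1 : dist (F^[φ J] V) u < ε' := hJ J le_rfl
    have h2 : dist (F^[φ (J + T)] V) u < ε' := hJ _ (Nat.le_add_right J T)
    have key : F^[n] (F^[φ J] V) = F^[φ (J + T)] V := by
      rw [← Function.iterate_add_apply, hn]
    have h3 : dist (F^[φ (J + T)] V) (F^[n] u) ≤ γ ^ n * dist (F^[φ J] V) u := by
      rw [← key]
      exact hshadow u hu _ (lt_trans h1 hε'd) n
    refine ⟨n, hnT, ?_⟩
    have hle1 : γ ^ n ≤ 1 := pow_le_one₀ hγ0 hγ1.le
    have h4 : γ ^ n * dist (F^[φ J] V) u < ε' := by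
      nlinarith [dist_nonneg (x := F^[φ J] V) (y := u)]
    calc dist (F^[n] u) u
        ≤ dist (F^[n] u) (F^[φ (J + T)] V) + dist (F^[φ (J + T)] V) u :=
          dist_triangle _ _ _
      _ < ε' + ε' := by
          rw [dist_comm (F^[n] u)]
          exact add_lt_add (lt_of_le_of_lt h3 h4) h2
      _ ≤ ε := hε'ε
  -- main argument
  intro x hx y hy hras
  by_contra hne
  have hc : 0 < dist x y := dist_pos.2 hne
  set c := dist x y with hcdef
  have hsame : ∀ t, dist (F^[t] x) (F^[t] y) ≤ γ ^ t * c := by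
    intro t
    induction t with
    | zero => simp [hcdef]
    | succ t ih =>
      rw [Function.iterate_succ_apply', Function.iterate_succ_apply']
      calc dist (F (F^[t] x)) (F (F^[t] y))
          ≤ γ * dist (F^[t] x) (F^[t] y) := hcontr _ _ (fun k => hras t k)
        _ ≤ γ * (γ ^ t * c) := mul_le_mul_of_nonneg_left ih hγ0
        _ = γ ^ (t + 1) * c := by ring
  set ε := min (c / 8) (d / 2) with hεdef
  have hε0 : 0 < ε := lt_min (by linarith) (by linarith)
  have hεd : ε < d := lt_of_le_of_lt (min_le_right _ _) (by linarith)
  have hεc : ε ≤ c / 8 := min_le_left _ _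
  have htend : Tendsto (fun t : ℕ => γ ^ t * c) atTop (nhds 0) := by
    simpa using (tendsto_pow_atTop_nhds_zero_of_lt_one hγ0 hγ1).mul_const c
  obtain ⟨T, hT⟩ := Metric.tendsto_atTop.1 htend (min (ε / 2) (c / 4))
    (lt_min (by linarith) (by linarith))
  have hTb : ∀ t, T ≤ t → γ ^ t * c < min (ε / 2) (c / 4) := by
    intro t ht
    have h := hT t ht
    rw [Real.dist_eq] at h
    have hnn : (0:ℝ) ≤ γ ^ t * c := mul_nonneg (pow_nonneg hγ0 t) hc.le
    rwa [sub_zero, abs_of_nonneg hnn] at h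
  obtain ⟨m, hmT, hm⟩ := hR y hy (ε / 2) (by linarith) T
  obtain ⟨n, hnT, hn⟩ := hR x hx (ε / 2) (by linarith) T
  have hmx : dist (F^[m] x) y < ε := by
    have h1 : γ ^ m * c < ε / 2 := lt_of_lt_of_le (hTb m hmT) (min_le_left _ _)
    calc dist (F^[m] x) y ≤ dist (F^[m] x) (F^[m] y) + dist (F^[m] y) y :=
          dist_triangle _ _ _
      _ < ε / 2 + ε / 2 := add_lt_add (lt_of_le_of_lt (hsame m) h1) hm
      _ = ε := by ring
  have hny : dist (F^[n] y) x < ε := by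
    have h1 : γ ^ n * c < ε / 2 := lt_of_lt_of_le (hTb n hnT) (min_le_left _ _)
    have h2 : dist (F^[n] y) (F^[n] x) ≤ γ ^ n * c := by
      rw [dist_comm]; exact hsame n
    calc dist (F^[n] y) x ≤ dist (F^[n] y) (F^[n] x) + dist (F^[n] x) x :=
          dist_triangle _ _ _
      _ < ε / 2 + ε / 2 := add_lt_add (lt_of_le_of_lt h2 h1) hn
      _ = ε := by ring
  have hA : dist (F^[n] (F^[m] x)) (F^[n] y) ≤ γ ^ n * dist (F^[m] x) y :=
    hshadow y hy _ (lt_trans hmx hεd) n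
  have hB : dist (F^[m] (F^[n] y)) (F^[m] x) ≤ γ ^ m * dist (F^[n] y) x :=
    hshadow x hx _ (lt_trans hny hεd) m
  have hmn1 : F^[n] (F^[m] x) = F^[m + n] x := by
    rw [← Function.iterate_add_apply, Nat.add_comm]
  have hmn2 : F^[m] (F^[n] y) = F^[m + n] y := by
    rw [← Function.iterate_add_apply]
  have hA' : dist (F^[m + n] x) (F^[n] y) < ε := by
    rw [← hmn1]
    have hle1 : γ ^ n ≤ 1 := pow_le_one₀ hγ0 hγ1.le
    have : γ ^ n * dist (F^[m] x) y < ε := by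
      nlinarith [dist_nonneg (x := F^[m] x) (y := y)]
    exact lt_of_le_of_lt hA this
  have hB' : dist (F^[m + n] y) (F^[m] x) < ε := by
    rw [← hmn2]
    have hle1 : γ ^ m ≤ 1 := pow_le_one₀ hγ0 hγ1.le
    have : γ ^ m * dist (F^[n] y) x < ε := by
      nlinarith [dist_nonneg (x := F^[n] y) (y := x)]
    exact lt_of_le_of_lt hB this
  have e1 : dist (F^[m + n] x) x < 2 * ε :=
    calc dist (F^[m + n] x) x ≤ dist (F^[m + n] x) (F^[n] y) + dist (F^[n] y) x :=
          dist_triangle _ _ _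
      _ < ε + ε := add_lt_add hA' hny
      _ = 2 * ε := by ring
  have e2 : dist (F^[m + n] y) y < 2 * ε :=
    calc dist (F^[m + n] y) y ≤ dist (F^[m + n] y) (F^[m] x) + dist (F^[m] x) y :=
          dist_triangle _ _ _
      _ < ε + ε := add_lt_add hB' hmx
      _ = 2 * ε := by ring
  have hmid : dist (F^[m + n] x) (F^[m + n] y) < c / 4 :=
    lt_of_le_of_lt (hsame (m + n))
      (lt_of_lt_of_le (hTb (m + n) (by omega)) (min_le_right _ _))
  have hfinal : c ≤ dist x (F^[m + n] x) + dist (F^[m + n] x) (F^[m + n] y) +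
      dist (F^[m + n] y) y := dist_triangle4 x _ _ y
  rw [dist_comm x (F^[m + n] x)] at hfinal
  linarith
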